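/- Let s ≥ 1 and N = (s+1)(s+2)/2, let c ∈ ℝ^s have all entries nonzero, and let h₁,…,h_K ∈ ℝ[z₁,…,z_s] with each h_k of the form h_k(z) = z_{a_k} z_{b_k} − c_{a_k} c_{b_k} for indices a_k, b_k ∈ {0,1,…,s} (with the convention z₀ := 1 and c₀ := 1). Suppose that for each i ∈ {1,…,s} there exist polynomials λ^{(i)}₁,…,λ^{(i)}_K of total degree at most 1 with z_i − c_i = Σ_{k=1}^K λ^{(i)}_k h_k. Let C ∈ ℝ^{K̄×K} be such that Cᵀ C is invertible, and set h̄(z) := C h(z). Then there exist a positive semidefinite matrix Q ∈ ℝ^{N×N} with rank Q = N − 1 and a positive semidefinite matrix Ū ∈ ℝ^{K̄N×K̄N} such that for all z ∈ ℝ^s: u₂(z)ᵀ Q u₂(z) − u₂(c)ᵀ Q u₂(c) = (h̄(z) ⊗ u₂(z))ᵀ Ū (h̄(z) ⊗ u₂(z)). -/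

import Mathlib

open Matrix

noncomputable section

/-- Index set for the monomials of degree at most `2` in `s` variables: pairs
`(i, j)` with `i ≤ j` in `Fin (s+1)`, where index `0` stands for the constant `1`.
Its cardinality is `N = (s+1)(s+2)/2`. -/
abbrev MonIdx (s : ℕ) := {p : Fin (s + 1) × Fin (s + 1) // p.1 ≤ p.2}

/-- The index of the constant monomial `1` (the "first" entry of `u₂`). -/
def idx1 (s : ℕ) : MonIdx s := ⟨(0, 0), le_refl _⟩

/-- Extended variable vector: `extv z 0 = 1` and `extv z (i+1) = z i`. -/
def extv {s : ℕ} (z : Fin s → ℝ) : Fin (s + 1) → ℝ := Fin.cons 1 z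

/-- `u₂ z` : the vector of all monomials of degree at most `2` in `z`;
its entry at `⟨(i, j), _⟩` is `z_i z_j` (with the convention `z_0 = 1`). -/
def u2 {s : ℕ} (z : Fin s → ℝ) : MonIdx s → ℝ := fun p => extv z p.1.1 * extv z p.1.2

/-- `E^r` : the diagonal matrix whose `(r, r)` entry is `1` and all others are `0`. -/
def Emat {s : ℕ} (r : MonIdx s) : Matrix (MonIdx s) (MonIdx s) ℝ :=
  Matrix.single r r 1

/-- `Q^r` : the symmetric matrix whose only nonzero entries are
`[Q^r]₁₁ = ((u₂ z₀)ᵣ)²`, `[Q^r]₁ᵣ = [Q^r]ᵣ₁ = -(u₂ z₀)ᵣ` and `[Q^r]ᵣᵣ = 1`. -/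
def Qmat {s : ℕ} (z₀ : Fin s → ℝ) (r : MonIdx s) : Matrix (MonIdx s) (MonIdx s) ℝ :=
  Matrix.single (idx1 s) (idx1 s) ((u2 z₀ r) ^ 2)
    + Matrix.single (idx1 s) r (-(u2 z₀ r))
    + Matrix.single r (idx1 s) (-(u2 z₀ r))
    + Matrix.single r r 1

/-- Kronecker product of two vectors: `(v ⊗ u)_{(k,t)} = v_k u_t`. -/
def kron {K N : Type*} (v : K → ℝ) (u : N → ℝ) : K × N → ℝ := fun p => v p.1 * u p.2
/-- Extended polynomial variables: `Xe 0 = 1` and `Xe (i+1) = X i`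
(the convention `z₀ := 1`). -/
def Xe {s : ℕ} : Fin (s + 1) → MvPolynomial (Fin s) ℝ := Fin.cons 1 MvPolynomial.X

/-- Extended constants: `ce c 0 = 1` and `ce c (i+1) = c i` (the convention `c₀ := 1`). -/
def ce {s : ℕ} (c : Fin s → ℝ) : Fin (s + 1) → ℝ := Fin.cons 1 c

/-! ### Auxiliary lemmas -/

section Aux

variable {s : ℕ}

lemma u2_idx1 (z : Fin s → ℝ) : u2 z (idx1 s) = 1 := by
  simp [u2, idx1, extv]

lemma eval_Xe (z : Fin s → ℝ) (i : Fin (s + 1)) :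
    MvPolynomial.eval z (Xe i) = extv z i := by
  induction i using Fin.cases with
  | zero => simp [Xe, extv]
  | succ i => simp [Xe, extv]

lemma Xe_totalDegree (i : Fin (s + 1)) : (Xe (s := s) i).totalDegree ≤ 1 := by
  induction i using Fin.cases with
  | zero => simp [Xe]
  | succ i => simp [Xe, MvPolynomial.totalDegree_X]

lemma prod_pow_step (z : Fin s → ℝ) (e : Fin s → ℕ) (i : Fin s) (hi : e i ≠ 0) :
    ∏ k, z k ^ e k = z i * ∏ k, z k ^ (Function.update e i (e i - 1)) k := by
  rw [← Finset.mul_prod_erase Finset.univ (fun k => z k ^ e k) (Finset.mem_univ i),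
      ← Finset.mul_prod_erase Finset.univ (fun k => z k ^ (Function.update e i (e i - 1)) k)
        (Finset.mem_univ i)]
  rw [Function.update_self, ← mul_assoc]
  have h1 : z i * z i ^ (e i - 1) = z i ^ e i := by
    rw [← pow_succ']
    congr 1
    omega
  rw [h1]
  refine congrArg _ (Finset.prod_congr rfl fun k hk => ?_)
  rw [Function.update_of_ne (Finset.ne_of_mem_erase hk)]

lemma sum_update_sub (e : Fin s → ℕ) (i : Fin s) (hi : e i ≠ 0) :
    ∑ k, (Function.update e i (e i - 1)) k = (∑ k, e k) - 1 := by
  rw [← Finset.add_sum_erase Finset.univ _ (Finset.mem_univ i),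
      ← Finset.add_sum_erase Finset.univ e (Finset.mem_univ i)]
  have h2 : ∑ k ∈ Finset.univ.erase i, (Function.update e i (e i - 1)) k
      = ∑ k ∈ Finset.univ.erase i, e k :=
    Finset.sum_congr rfl fun k hk => by rw [Function.update_of_ne (Finset.ne_of_mem_erase hk)]
  rw [h2, Function.update_self]
  omega

lemma monomial_as_u2 (e : Fin s → ℕ) (he : ∑ i, e i ≤ 2) :
    ∃ t : MonIdx s, ∀ z : Fin s → ℝ, ∏ k, z k ^ e k = u2 z t := by
  by_cases h0 : ∀ k, e k = 0
  · refine ⟨idx1 s, fun z => ?_⟩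
    simp [h0, u2, idx1, extv]
  push_neg at h0
  obtain ⟨i, hi⟩ := h0
  have hstep : ∀ z : Fin s → ℝ,
      ∏ k, z k ^ e k = z i * ∏ k, z k ^ (Function.update e i (e i - 1)) k :=
    fun z => prod_pow_step z e i hi
  have hsum1 := sum_update_sub e i hi
  by_cases h1 : ∀ k, (Function.update e i (e i - 1)) k = 0
  · refine ⟨⟨(0, i.succ), Fin.zero_le _⟩, fun z => ?_⟩
    rw [hstep z]
    simp [h1, u2, extv]
  push_neg at h1
  obtain ⟨j, hj⟩ := h1
  have hstep2 : ∀ z : Fin s → ℝ,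
      ∏ k, z k ^ (Function.update e i (e i - 1)) k
        = z j * ∏ k, z k ^ (Function.update (Function.update e i (e i - 1)) j
            ((Function.update e i (e i - 1)) j - 1)) k :=
    fun z => prod_pow_step z _ j hj
  have hsum2 := sum_update_sub (Function.update e i (e i - 1)) j hj
  have hzero : ∀ k, (Function.update (Function.update e i (e i - 1)) j
      ((Function.update e i (e i - 1)) j - 1)) k = 0 := by
    have h4 : ∑ k, (Function.update (Function.update e i (e i - 1)) j
        ((Function.update e i (e i - 1)) j - 1)) k = 0 := by
      have hjp : 1 ≤ (Function.update e i (e i - 1)) j := Nat.one_le_iff_ne_zero.mpr hj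
      have hip : 1 ≤ e i := Nat.one_le_iff_ne_zero.mpr hi
      have hle : (Function.update e i (e i - 1)) j ≤ ∑ k, (Function.update e i (e i - 1)) k :=
        Finset.single_le_sum (fun k _ => Nat.zero_le _) (Finset.mem_univ j)
      have hle2 : e i ≤ ∑ k, e k :=
        Finset.single_le_sum (fun k _ => Nat.zero_le _) (Finset.mem_univ i)
      omega
    intro k
    exact (Finset.sum_eq_zero_iff).mp h4 k (Finset.mem_univ k)
  have hprod : ∀ z : Fin s → ℝ, ∏ k, z k ^ e k = z i * z j := by
    intro z
    rw [hstep z, hstep2 z]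
    simp [hzero]
  rcases le_total i j with hij | hij
  · refine ⟨⟨(i.succ, j.succ), Fin.succ_le_succ_iff.mpr hij⟩, fun z => ?_⟩
    rw [hprod z]
    simp only [u2, extv, Fin.cons_succ]
  · refine ⟨⟨(j.succ, i.succ), Fin.succ_le_succ_iff.mpr hij⟩, fun z => ?_⟩
    rw [hprod z]
    simp only [u2, extv, Fin.cons_succ]
    ring

lemma eval_mem_u2_span (p : MvPolynomial (Fin s) ℝ) (hp : p.totalDegree ≤ 2) :
    (fun z : Fin s → ℝ => MvPolynomial.eval z p) ∈
      Submodule.span ℝ (Set.range fun t : MonIdx s => fun z : Fin s → ℝ => u2 z t) := by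
  have hrep : (fun z : Fin s → ℝ => MvPolynomial.eval z p)
      = ∑ d ∈ p.support, MvPolynomial.coeff d p • (fun z : Fin s → ℝ => ∏ i, z i ^ d i) := by
    funext z
    rw [MvPolynomial.eval_eq']
    simp [Finset.sum_apply]
  rw [hrep]
  refine Submodule.sum_mem _ fun d hd => Submodule.smul_mem _ _ ?_
  have hdeg : ∑ i, d i ≤ 2 := by
    have h1 := MvPolynomial.le_totalDegree hd
    have h2 : (d.sum fun _ e => e) = ∑ i, d i := Finsupp.sum_fintype _ _ fun _ => rfl
    omega
  obtain ⟨t, ht⟩ := monomial_as_u2 (fun i => d i) hdeg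
  have heq : (fun z : Fin s → ℝ => ∏ i, z i ^ d i) = fun z => u2 z t := funext fun z => ht z
  rw [heq]
  exact Submodule.subset_span ⟨t, rfl⟩

lemma quad_form {m n : Type*} [Fintype m] [Fintype n] (A : Matrix m n ℝ) (x : n → ℝ) :
    x ⬝ᵥ ((Aᵀ * A) *ᵥ x) = (A *ᵥ x) ⬝ᵥ (A *ᵥ x) := by
  rw [← Matrix.mulVec_mulVec, Matrix.dotProduct_mulVec, Matrix.vecMul_transpose]

end Aux

/-- under the hypotheses of STATEMENT 10, for any `C ∈ ℝ^{K̄×K}` with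
`Cᵀ C` invertible and `h̄(z) = C h(z)`, there exist a PSD matrix `Q` of rank `N − 1`
and a PSD matrix `Ū` with
`u₂(z)ᵀ Q u₂(z) − u₂(c)ᵀ Q u₂(c) = (h̄(z) ⊗ u₂(z))ᵀ Ū (h̄(z) ⊗ u₂(z))` for all `z`. -/
theorem stmt18 (s : ℕ) (hs : 1 ≤ s) (c : Fin s → ℝ) (hc : ∀ i, c i ≠ 0)
    (K : ℕ) (h : Fin K → MvPolynomial (Fin s) ℝ) (a b : Fin K → Fin (s + 1))
    (hform : ∀ k, h k = Xe (a k) * Xe (b k) - MvPolynomial.C (ce c (a k) * ce c (b k)))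
    (hlam : ∀ i : Fin s, ∃ lam : Fin K → MvPolynomial (Fin s) ℝ,
        (∀ k, (lam k).totalDegree ≤ 1) ∧
        MvPolynomial.X i - MvPolynomial.C (c i) = ∑ k, lam k * h k)
    (Kb : ℕ) (C : Matrix (Fin Kb) (Fin K) ℝ) (hC : IsUnit (Cᵀ * C)) :
    ∃ Q : Matrix (MonIdx s) (MonIdx s) ℝ, Q.PosSemidef ∧
      Q.rank = Fintype.card (MonIdx s) - 1 ∧
      ∃ Ub : Matrix (Fin Kb × MonIdx s) (Fin Kb × MonIdx s) ℝ, Ub.PosSemidef ∧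
        ∀ z : Fin s → ℝ,
          u2 z ⬝ᵥ (Q *ᵥ u2 z) - u2 c ⬝ᵥ (Q *ᵥ u2 c) =
            kron (C *ᵥ fun k => MvPolynomial.eval z (h k)) (u2 z) ⬝ᵥ
              (Ub *ᵥ kron (C *ᵥ fun k => MvPolynomial.eval z (h k)) (u2 z)) := by
  classical
  -- extended lambda certificates
  have hlamE : ∀ i : Fin (s + 1), ∃ lamE : Fin K → MvPolynomial (Fin s) ℝ,
      (∀ k, (lamE k).totalDegree ≤ 1) ∧
      Xe i - MvPolynomial.C (ce c i) = ∑ k, lamE k * h k := by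
    intro i
    induction i using Fin.cases with
    | zero =>
        refine ⟨0, fun k => by simp, ?_⟩
        simp [Xe, ce]
    | succ i' =>
        obtain ⟨lam, h1, h2⟩ := hlam i'
        exact ⟨lam, h1, by simpa [Xe, ce] using h2⟩
  choose lamE hdegE hsumE using hlamE
  -- left inverse of C
  have hdet : IsUnit (Cᵀ * C).det := (Matrix.isUnit_iff_isUnit_det _).mp hC
  set D : Matrix (Fin K) (Fin Kb) ℝ := (Cᵀ * C)⁻¹ * Cᵀ with hDdef
  have hDC : D * C = 1 := by
    rw [hDdef, Matrix.mul_assoc]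
    exact Matrix.nonsing_inv_mul _ hdet
  have hrec : ∀ (z : Fin s → ℝ) (k : Fin K),
      MvPolynomial.eval z (h k)
        = ∑ j, D k j * (C *ᵥ fun k' => MvPolynomial.eval z (h k')) j := by
    intro z k
    have h1 : (fun k' => MvPolynomial.eval z (h k'))
        = D *ᵥ (C *ᵥ fun k' => MvPolynomial.eval z (h k')) := by
      rw [Matrix.mulVec_mulVec, hDC, Matrix.one_mulVec]
    have h2 := congrFun h1 k
    rw [h2]
    simp [Matrix.mulVec, dotProduct]
  set F : Fin Kb × MonIdx s → (Fin s → ℝ) → ℝ :=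
    fun p z => (C *ᵥ fun k => MvPolynomial.eval z (h k)) p.1 * u2 z p.2 with hF
  -- each h_k · u2-entry is in the span of the F's
  have claim1 : ∀ (k : Fin K) (t : MonIdx s),
      (fun z : Fin s → ℝ => MvPolynomial.eval z (h k) * u2 z t)
        ∈ Submodule.span ℝ (Set.range F) := by
    intro k t
    have hrepr : (fun z : Fin s → ℝ => MvPolynomial.eval z (h k) * u2 z t)
        = ∑ j, D k j • F (j, t) := by
      funext z
      simp only [Finset.sum_apply, Pi.smul_apply, smul_eq_mul, hF]
      rw [hrec z k, Finset.sum_mul]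
      exact Finset.sum_congr rfl fun j _ => by ring
    rw [hrepr]
    exact Submodule.sum_mem _ fun j _ =>
      Submodule.smul_mem _ _ (Submodule.subset_span ⟨(j, t), rfl⟩)
  -- (deg ≤ 2 poly) · h_k is in the span of the F's
  have claim2 : ∀ (k : Fin K) (μ : MvPolynomial (Fin s) ℝ), μ.totalDegree ≤ 2 →
      (fun z : Fin s → ℝ => MvPolynomial.eval z μ * MvPolynomial.eval z (h k))
        ∈ Submodule.span ℝ (Set.range F) := by
    intro k μ hμ
    have hmem := eval_mem_u2_span μ hμ
    set L : ((Fin s → ℝ) → ℝ) →ₗ[ℝ] ((Fin s → ℝ) → ℝ) :=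
      LinearMap.mulRight ℝ (fun z : Fin s → ℝ => MvPolynomial.eval z (h k)) with hL
    have h2 := Submodule.apply_mem_span_image_of_mem_span (f := L) hmem
    have hsub : L '' (Set.range fun t : MonIdx s => fun z : Fin s → ℝ => u2 z t)
        ⊆ ↑(Submodule.span ℝ (Set.range F)) := by
      rintro x ⟨y, ⟨t, rfl⟩, rfl⟩
      have hLy : L (fun z : Fin s → ℝ => u2 z t)
          = fun z : Fin s → ℝ => MvPolynomial.eval z (h k) * u2 z t := by
        funext z
        simp [hL, LinearMap.mulRight_apply, mul_comm]
      rw [hLy]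
      exact claim1 k t
    have h3 := Submodule.span_le.mpr hsub h2
    have hLx : L (fun z : Fin s → ℝ => MvPolynomial.eval z μ)
        = fun z : Fin s → ℝ => MvPolynomial.eval z μ * MvPolynomial.eval z (h k) := by
      funext z
      simp [hL, LinearMap.mulRight_apply]
    rwa [hLx] at h3
  -- every centered u2-entry is in the span of the F's
  have claim3 : ∀ r : MonIdx s,
      (fun z : Fin s → ℝ => u2 z r - u2 c r) ∈ Submodule.span ℝ (Set.range F) := by
    rintro ⟨⟨i, j⟩, hij⟩
    set μ : Fin K → MvPolynomial (Fin s) ℝ :=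
      fun k => Xe i * lamE j k + MvPolynomial.C (ce c j) * lamE i k with hμ
    have hdegμ : ∀ k, (μ k).totalDegree ≤ 2 := by
      intro k
      refine le_trans (MvPolynomial.totalDegree_add _ _) (max_le ?_ ?_)
      · refine le_trans (MvPolynomial.totalDegree_mul _ _) ?_
        have h5 := Xe_totalDegree (s := s) i
        have h6 := hdegE j k
        omega
      · refine le_trans (MvPolynomial.totalDegree_mul _ _) ?_
        have h5 : (MvPolynomial.C (σ := Fin s) (ce c j)).totalDegree = 0 :=
          MvPolynomial.totalDegree_C _
        have h6 := hdegE i k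
        omega
    have hkey : (fun z : Fin s → ℝ =>
          u2 z ⟨(i, j), hij⟩ - u2 c ⟨(i, j), hij⟩)
        = ∑ k, (fun z : Fin s → ℝ =>
            MvPolynomial.eval z (μ k) * MvPolynomial.eval z (h k)) := by
      funext z
      have hJ : extv z j - ce c j
          = ∑ k, MvPolynomial.eval z (lamE j k) * MvPolynomial.eval z (h k) := by
        have h7 := congrArg (MvPolynomial.eval z) (hsumE j)
        simpa only [map_sub, map_sum, _root_.map_mul, MvPolynomial.eval_C, eval_Xe] using h7
      have hI : extv z i - ce c i
          = ∑ k, MvPolynomial.eval z (lamE i k) * MvPolynomial.eval z (h k) := by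
        have h7 := congrArg (MvPolynomial.eval z) (hsumE i)
        simpa only [map_sub, map_sum, _root_.map_mul, MvPolynomial.eval_C, eval_Xe] using h7
      simp only [Finset.sum_apply]
      have expand : ∀ k, MvPolynomial.eval z (μ k) * MvPolynomial.eval z (h k)
          = extv z i * (MvPolynomial.eval z (lamE j k) * MvPolynomial.eval z (h k))
            + ce c j * (MvPolynomial.eval z (lamE i k) * MvPolynomial.eval z (h k)) := by
        intro k
        simp only [hμ, map_add, _root_.map_mul, MvPolynomial.eval_C, eval_Xe]
        ring
      rw [Finset.sum_congr rfl fun k _ => expand k, Finset.sum_add_distrib,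
        ← Finset.mul_sum, ← Finset.mul_sum, ← hJ, ← hI]
      have hu2z : u2 z ⟨(i, j), hij⟩ = extv z i * extv z j := rfl
      have hu2c : u2 c ⟨(i, j), hij⟩ = ce c i * ce c j := rfl
      rw [hu2z, hu2c]
      ring
    rw [hkey]
    exact Submodule.sum_mem _ fun k _ => claim2 k (μ k) (hdegμ k)
  -- extract coefficient vectors
  have claim4 : ∀ r : MonIdx s, ∃ v : Fin Kb × MonIdx s → ℝ,
      ∑ p, v p • F p = fun z : Fin s → ℝ => u2 z r - u2 c r := fun r =>
    (Submodule.mem_span_range_iff_exists_fun ℝ).mp (claim3 r)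
  choose v hvv using claim4
  -- the matrices
  set B : Matrix (MonIdx s) (MonIdx s) ℝ := fun r r' =>
    if r = idx1 s then 0 else if r' = r then 1 else if r' = idx1 s then -(u2 c r) else 0
    with hB
  set Vm : Matrix (MonIdx s) (Fin Kb × MonIdx s) ℝ := fun r p =>
    if r = idx1 s then 0 else v r p with hVm
  have hBv : ∀ (x : MonIdx s → ℝ) (r : MonIdx s),
      (B *ᵥ x) r = if r = idx1 s then 0 else x r - u2 c r * x (idx1 s) := by
    intro x r
    by_cases hr : r = idx1 s
    · simp [Matrix.mulVec, dotProduct, hB, hr]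
    · simp only [Matrix.mulVec, dotProduct, hB, if_neg hr]
      have hterm : ∀ r' : MonIdx s,
          (if r' = r then (1:ℝ) else if r' = idx1 s then -(u2 c r) else 0) * x r'
            = (if r' = r then x r' else 0)
              + (if r' = idx1 s then -(u2 c r) * x r' else 0) := by
        intro r'
        by_cases h1 : r' = r
        · subst h1
          simp [hr]
        · by_cases h2 : r' = idx1 s
          · subst h2
            simp [h1]
          · simp [h1, h2]
      rw [Finset.sum_congr rfl fun r' _ => hterm r', Finset.sum_add_distrib,
        Finset.sum_ite_eq' Finset.univ r, Finset.sum_ite_eq' Finset.univ (idx1 s)]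
      simp only [Finset.mem_univ, if_true]
      ring
  have hVv : ∀ (w : Fin Kb × MonIdx s → ℝ) (r : MonIdx s),
      (Vm *ᵥ w) r = if r = idx1 s then 0 else ∑ p, v r p * w p := by
    intro w r
    by_cases hr : r = idx1 s
    · simp [Matrix.mulVec, dotProduct, hVm, hr]
    · simp [Matrix.mulVec, dotProduct, hVm, hr]
  -- rank computation
  have hrange : LinearMap.range B.mulVecLin
      = LinearMap.ker (LinearMap.proj (R := ℝ) (φ := fun _ : MonIdx s => ℝ) (idx1 s)) := by
    apply le_antisymm
    · rintro y ⟨x, rfl⟩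
      simp only [LinearMap.mem_ker, LinearMap.proj_apply, Matrix.mulVecLin_apply]
      rw [hBv]
      simp
    · intro y hy
      simp only [LinearMap.mem_ker, LinearMap.proj_apply] at hy
      refine ⟨y, ?_⟩
      rw [Matrix.mulVecLin_apply]
      funext r
      rw [hBv]
      by_cases hr : r = idx1 s
      · rw [if_pos hr]
        subst hr
        exact hy.symm
      · rw [if_neg hr, hy, mul_zero, sub_zero]
  have hrank : (Bᵀ * B).rank = Fintype.card (MonIdx s) - 1 := by
    rw [Matrix.rank_transpose_mul_self]
    have hrdef : B.rank = Module.finrank ℝ (LinearMap.range B.mulVecLin) := rfl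
    rw [hrdef, hrange]
    have hsurj : Function.Surjective
        (LinearMap.proj (R := ℝ) (φ := fun _ : MonIdx s => ℝ) (idx1 s)) :=
      fun y => ⟨fun _ => y, rfl⟩
    have htop : LinearMap.range
        (LinearMap.proj (R := ℝ) (φ := fun _ : MonIdx s => ℝ) (idx1 s)) = ⊤ :=
      LinearMap.range_eq_top.mpr hsurj
    have hadd := LinearMap.finrank_range_add_finrank_ker
      (LinearMap.proj (R := ℝ) (φ := fun _ : MonIdx s => ℝ) (idx1 s))
    rw [htop, finrank_top, Module.finrank_pi, Module.finrank_self] at hadd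
    omega
  have hpsdB : (Bᵀ * B).PosSemidef := by
    have h8 := Matrix.posSemidef_conjTranspose_mul_self B
    rwa [Matrix.conjTranspose_eq_transpose_of_trivial] at h8
  have hpsdV : (Vmᵀ * Vm).PosSemidef := by
    have h8 := Matrix.posSemidef_conjTranspose_mul_self Vm
    rwa [Matrix.conjTranspose_eq_transpose_of_trivial] at h8
  refine ⟨Bᵀ * B, hpsdB, hrank, Vmᵀ * Vm, hpsdV, ?_⟩
  intro z
  rw [quad_form, quad_form, quad_form]
  have hBc : B *ᵥ u2 c = 0 := by
    funext r
    rw [hBv]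
    by_cases hr : r = idx1 s
    · simp [hr]
    · simp [hr, u2_idx1]
  have hBz : (B *ᵥ u2 z) = fun r => if r = idx1 s then 0 else u2 z r - u2 c r := by
    funext r
    rw [hBv]
    by_cases hr : r = idx1 s
    · simp [hr]
    · simp [hr, u2_idx1]
  have hVz : Vm *ᵥ (kron (C *ᵥ fun k => MvPolynomial.eval z (h k)) (u2 z))
      = fun r => if r = idx1 s then 0 else u2 z r - u2 c r := by
    funext r
    rw [hVv]
    by_cases hr : r = idx1 s
    · simp [hr]
    · rw [if_neg hr, if_neg hr]
      have h9 := congrFun (hvv r) z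
      simp only [Finset.sum_apply, Pi.smul_apply, smul_eq_mul, hF] at h9
      rw [← h9]
      exact Finset.sum_congr rfl fun p _ => rfl
  rw [hBc, hBz, hVz]
  simp
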